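/- For each equivalence class of the relation ∼ (where α ∼ γ iff rajcode(α) = rajcode(γ)), there is a unique snowy weak composition α in the class; moreover, if γ ∼ α and α is snowy, then γ_r ≥ α_r for all r. In other words, a snowy weak composition is the unique entry-wise minimum element in each rajcode-equivalence class. -/
import Mathlib


open scoped Classical

noncomputable section

/-- A weak composition: a finitely supported sequence of naturals.  Indices are
thought of as positive integers; index `0` is required to satisfy `α 0 = 0`. -/
abbrev WeakComp := ℕ →₀ ℕ

/-- A weak composition is snowy if its positive entries are pairwise distinct. -/
def Snowy (α : WeakComp) : Prop :=
  ∀ r r', 0 < α r → α r = α r' → r = r'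

/-- The key diagram of a weak composition: the left-justified diagram with
`α r` cells in row `r` (columns `1, …, α r`). -/
def keyDiagram (α : WeakComp) : Finset (ℕ × ℕ) :=
  α.support.biUnion fun r => (Finset.Icc 1 (α r)).image fun c => (r, c)

/-- Largest row index occurring in a diagram. -/
def rowBound (D : Finset (ℕ × ℕ)) : ℕ := (D.image Prod.fst).sup id

/-- One step of the snow-diagram algorithm: in row `r`, mark as a dark cloud the
rightmost cell of `D` whose column contains no dark cloud of `S` yet. -/
def darkStep (D S : Finset (ℕ × ℕ)) (r : ℕ) : Finset (ℕ × ℕ) :=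
  let cols := (D.filter fun p => p.1 = r ∧ ∀ q ∈ S, q.2 ≠ p.2).image Prod.snd
  if h : cols.Nonempty then insert (r, cols.max' h) S else S

/-- Process rows `N, N-1, …, N-k+1` from bottom to top. -/
def darkAux (D : Finset (ℕ × ℕ)) (N : ℕ) : ℕ → Finset (ℕ × ℕ)
  | 0 => ∅
  | k + 1 => darkStep D (darkAux D N k) (N - k)

/-- The dark cloud diagram of a diagram `D`: iterate the rows of `D` from bottom
to top, marking in each row the rightmost cell whose column contains no dark
cloud from a lower row. -/
def dark (D : Finset (ℕ × ℕ)) : Finset (ℕ × ℕ) := darkAux D (rowBound D) (rowBound D)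

/-- The underlying diagram of the snow diagram of `D`: the cells of `D` together
with all (snowflake) positions above a dark cloud in its column. -/
def snow (D : Finset (ℕ × ℕ)) : Finset (ℕ × ℕ) :=
  D ∪ (dark D).biUnion fun p => (Finset.Icc 1 p.1).image fun r => (r, p.2)

/-- `rajcode` of a diagram: the number of cells in row `r` of its snow diagram. -/
def rajcodeD (D : Finset (ℕ × ℕ)) (r : ℕ) : ℕ :=
  ((snow D).filter fun p => p.1 = r).card

/-- `raj` of a diagram: the total number of cells of its snow diagram. -/
def rajD (D : Finset (ℕ × ℕ)) : ℕ := (snow D).card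

/-- `rajcode` of a weak composition. -/
def rajcode (α : WeakComp) (r : ℕ) : ℕ := rajcodeD (keyDiagram α) r

/-- `raj` of a weak composition. -/
def raj (α : WeakComp) : ℕ := rajD (keyDiagram α)

/-- Non-attacking rook diagram: a finite subset of `ℤ_{>0} × ℤ_{>0}` with at
most one cell in each row and at most one cell in each column. -/
def IsRook (R : Finset (ℕ × ℕ)) : Prop :=
  (∀ p ∈ R, 1 ≤ p.1 ∧ 1 ≤ p.2) ∧
    ∀ p ∈ R, ∀ q ∈ R, (p.1 = q.1 ∨ p.2 = q.2) → p = q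

/-- The sum `|α|` of the entries of a weak composition. -/
def wsum (α : WeakComp) : ℕ := α.sum fun _ v => v

/-- The number of pairs `(r, r')` with `1 ≤ r < r'` and `α r < α r'`. -/
def invCount (α : WeakComp) : ℕ :=
  ((Finset.Icc 1 (α.support.sup id) ×ˢ α.support).filter fun p =>
      p.1 < p.2 ∧ α p.1 < α p.2).card

/-- Swap entries `i` and `i+1` of a weak composition. -/
def swapEntries (i : ℕ) (α : WeakComp) : WeakComp :=
  Finsupp.equivMapDomain (Equiv.swap i (i + 1)) α

/-- The Rothe diagram of `w ∈ S_n`, in 1-based coordinates: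
`{(r, w(r')) : r < r', w(r) > w(r')}`. -/
def rothe {n : ℕ} (w : Equiv.Perm (Fin n)) : Finset (ℕ × ℕ) :=
  (Finset.univ.filter fun p : Fin n × Fin n => p.1 < p.2 ∧ w p.2 < w p.1).image
    fun p => ((p.1 : ℕ) + 1, (w p.2 : ℕ) + 1)

/-- Length of the longest increasing subsequence of `w` starting at position `r`
(equivalently, starting with the value `w r`). -/
def LISfrom {n : ℕ} (w : Equiv.Perm (Fin n)) (r : Fin n) : ℕ :=
  Finset.sup (Finset.univ.filter fun s : Finset (Fin n) =>
      r ∈ s ∧ (∀ i ∈ s, r ≤ i) ∧ ∀ i ∈ s, ∀ j ∈ s, i < j → w i < w j)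
    Finset.card

/-- Insert `x` into a strictly decreasing row: replace the largest entry `< x`
(returning it as bumped), or append `x` at the end. -/
def insertRow : List ℕ → ℕ → List ℕ × Option ℕ
  | [], x => ([x], none)
  | a :: t, x =>
      if a < x then (x :: t, some a)
      else (a :: (insertRow t x).1, (insertRow t x).2)

/-- The 1-based value of `w` at 0-based position `i` (0 if out of range). -/
def oneline {n : ℕ} (w : Equiv.Perm (Fin n)) (i : ℕ) : ℕ :=
  if h : i < n then (w ⟨i, h⟩ : ℕ) + 1 else 0

/-- Row one of the Schensted insertion tableau after the first `k` insertions of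
the values `w(n), w(n-1), …` (1-based values, inserted from the last position). -/
def rowOneAux {n : ℕ} (w : Equiv.Perm (Fin n)) : ℕ → List ℕ
  | 0 => []
  | k + 1 => (insertRow (rowOneAux w k) (oneline w (n - 1 - k))).1

/-- The value bumped from row one when the value `w r` is inserted (during the
Schensted insertion of `w(n), …, w(1)` into the empty tableau); `none` if `w r`
is appended at the end of row one. -/
def bumpedFromRowOne {n : ℕ} (w : Equiv.Perm (Fin n)) (r : Fin n) : Option ℕ :=
  (insertRow (rowOneAux w (n - 1 - (r : ℕ))) (oneline w (r : ℕ))).2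

/-- Position `i` starts a maximal decreasing run of `u` (in one-line notation). -/
def IsRunStart {n : ℕ} (u : Equiv.Perm (Fin n)) (i : Fin n) : Prop :=
  ∀ j : Fin n, (j : ℕ) + 1 = (i : ℕ) → u j < u i

/-- A fireworks permutation: the initial elements of its maximal decreasing runs
are increasing. -/
def Fireworks {n : ℕ} (u : Equiv.Perm (Fin n)) : Prop :=
  ∀ i j : Fin n, IsRunStart u i → IsRunStart u j → i < j → u i < u j

/-- An inverse fireworks permutation. -/
def InverseFireworks {n : ℕ} (w : Equiv.Perm (Fin n)) : Prop := Fireworks w⁻¹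

/-- The `n`-th Bell number: the number of set partitions (equivalence relations)
of an `n`-element set. -/
def bell (n : ℕ) : ℕ := Nat.card (Setoid (Fin n))

/-- The staircase board `Stair_n = {(r,c) : 1 ≤ r ≤ n-1, 1 ≤ c ≤ n-r}`. -/
def stair (n : ℕ) : Finset (ℕ × ℕ) :=
  (Finset.Icc 1 n ×ˢ Finset.Icc 1 n).filter fun p => p.1 ≤ n - 1 ∧ p.2 ≤ n - p.1

/-- All cells weakly above a rook of `R` in its column, or weakly to the left of
a rook of `R` in its row. -/
def hooks (R : Finset (ℕ × ℕ)) : Finset (ℕ × ℕ) :=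
  R.biUnion fun p =>
    ((Finset.Icc 1 p.1).image fun r => (r, p.2)) ∪
      ((Finset.Icc 1 p.2).image fun c => (p.1, c))

/-- The Northwest number `NW(R)`. -/
def NW (R : Finset (ℕ × ℕ)) : ℕ := (hooks R).card

/-- The Garsia–Remmel statistic: the number of cells of `Stair_n` that are not
weakly above a rook in its column and not weakly to the left of a rook in its
row. -/
def GRcount (n : ℕ) (R : Finset (ℕ × ℕ)) : ℕ :=
  ((stair n).filter fun q =>
      ¬ ∃ p ∈ R, (p.2 = q.2 ∧ q.1 ≤ p.1) ∨ (p.1 = q.1 ∧ q.2 ≤ p.2)).card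

/-- Garsia–Remmel `q`-Stirling numbers of the second kind. -/
def qStirling : ℕ → ℕ → Polynomial ℤ
  | 0, 0 => 1
  | 0, _ + 1 => 0
  | _ + 1, 0 => 0
  | n + 1, k + 1 =>
      Polynomial.X ^ k * qStirling n k +
        (∑ i ∈ Finset.range (k + 1), Polynomial.X ^ i) * qStirling n (k + 1)

/-- The `q`-Bell polynomial `B_n(q) = Σ_{k=0}^n S_{n,k}(q)`. -/
def qBell (n : ℕ) : Polynomial ℤ := ∑ k ∈ Finset.range (n + 1), qStirling n k

/-- Tail lexicographic order on exponent vectors: `γ < α` iff there is `k` with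
`γ k < α k` and `γ j = α j` for all `j > k`. -/
def TailLt (γ α : ℕ →₀ ℕ) : Prop :=
  ∃ k, γ k < α k ∧ ∀ j, k < j → γ j = α j


/-! ### Auxiliary lemmas -/

lemma mem_keyDiagram {α : WeakComp} {p : ℕ × ℕ} :
    p ∈ keyDiagram α ↔ 1 ≤ p.2 ∧ p.2 ≤ α p.1 := by
  unfold keyDiagram
  simp only [Finset.mem_biUnion, Finset.mem_image, Finset.mem_Icc,
    Finsupp.mem_support_iff]
  constructor
  · rintro ⟨r, hr, c, ⟨h1, h2⟩, rfl⟩; exact ⟨h1, h2⟩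
  · rintro ⟨h1, h2⟩
    exact ⟨p.1, by omega, p.2, ⟨h1, h2⟩, rfl⟩

lemma keyDiagram_row_pos {γ : WeakComp} (h0 : γ 0 = 0) {p : ℕ × ℕ}
    (hp : p ∈ keyDiagram γ) : 1 ≤ p.1 := by
  rcases mem_keyDiagram.1 hp with ⟨h1, h2⟩
  rcases Nat.eq_zero_or_pos p.1 with h | h
  · rw [h, h0] at h2; omega
  · exact h

lemma row_le_rowBound {D : Finset (ℕ × ℕ)} {p : ℕ × ℕ} (hp : p ∈ D) :
    p.1 ≤ rowBound D :=
  Finset.le_sup (f := id) (Finset.mem_image_of_mem Prod.fst hp)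

lemma darkAux_spec (D : Finset (ℕ × ℕ)) (hD : ∀ p ∈ D, 1 ≤ p.1) (N : ℕ) :
    ∀ k,
      (∀ p ∈ darkAux D N k, p ∈ D ∧ N - k < p.1) ∧
      (∀ p ∈ darkAux D N k, ∀ q ∈ darkAux D N k, p.2 = q.2 ∨ p.1 = q.1 → p = q) ∧
      (∀ p ∈ D, N - k < p.1 → p.1 ≤ N →
        ∃ q ∈ darkAux D N k, (q.2 = p.2 ∧ p.1 < q.1) ∨ (q.1 = p.1 ∧ p.2 ≤ q.2)) := by
  intro k
  induction k with
  | zero =>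
    refine ⟨by simp [darkAux], by simp [darkAux], ?_⟩
    intro p _ h1 h2; omega
  | succ k ih =>
    obtain ⟨ih1, ih2, ih3⟩ := ih
    show _ ∧ _ ∧ _
    rw [darkAux]
    set S := darkAux D N k with hS
    set r0 := N - k with hr0
    unfold darkStep
    dsimp only
    split
    case isTrue h =>
      set cols := (D.filter fun p => p.1 = r0 ∧ ∀ q ∈ S, q.2 ≠ p.2).image Prod.snd
        with hcols
      have hmem_cols : ∀ c, c ∈ cols ↔ (r0, c) ∈ D ∧ ∀ q ∈ S, q.2 ≠ c := by
        intro c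
        simp only [hcols, Finset.mem_image, Finset.mem_filter]
        constructor
        · rintro ⟨p, ⟨hp, hp1, hfree⟩, rfl⟩
          refine ⟨?_, hfree⟩
          rw [← hp1, Prod.mk.eta]; exact hp
        · rintro ⟨hp, hfree⟩
          exact ⟨(r0, c), ⟨hp, rfl, hfree⟩, rfl⟩
      set m := cols.max' h with hm
      have hmcols : m ∈ cols := cols.max'_mem h
      have hmD : (r0, m) ∈ D := ((hmem_cols m).1 hmcols).1
      have hmfree : ∀ q ∈ S, q.2 ≠ m := ((hmem_cols m).1 hmcols).2
      have hr0pos : 1 ≤ r0 := hD _ hmD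
      refine ⟨?_, ?_, ?_⟩
      · intro p hp
        rcases Finset.mem_insert.1 hp with rfl | hp
        · exact ⟨hmD, by omega⟩
        · have := ih1 p hp; exact ⟨this.1, by omega⟩
      · intro p hp q hq hpq
        rcases Finset.mem_insert.1 hp with rfl | hp <;>
          rcases Finset.mem_insert.1 hq with rfl | hq
        · rfl
        · exfalso
          rcases hpq with h2 | h2
          · exact hmfree q hq h2.symm
          · have := (ih1 q hq).2; simp at h2; omega
        · exfalso
          rcases hpq with h2 | h2
          · exact hmfree p hp h2
          · have := (ih1 p hp).2; simp at h2; omega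
        · exact ih2 p hp q hq hpq
      · intro p hp h1 h2
        by_cases hcase : N - k < p.1
        · obtain ⟨q, hq, hq2⟩ := ih3 p hp hcase h2
          exact ⟨q, Finset.mem_insert_of_mem hq, hq2⟩
        · have hpr : p.1 = r0 := by omega
          by_cases hfree : ∀ q ∈ S, q.2 ≠ p.2
          · have hpcols : p.2 ∈ cols := by
              rw [hmem_cols]
              refine ⟨?_, hfree⟩
              rwa [← hpr, Prod.mk.eta]
            exact ⟨(r0, m), Finset.mem_insert_self _ _,
              Or.inr ⟨hpr.symm, cols.le_max' _ hpcols⟩⟩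
          · push_neg at hfree
            obtain ⟨q, hq, hq2⟩ := hfree
            refine ⟨q, Finset.mem_insert_of_mem hq, Or.inl ⟨hq2, ?_⟩⟩
            have := (ih1 q hq).2; omega
    case isFalse h =>
      refine ⟨?_, ih2, ?_⟩
      · intro p hp; have := ih1 p hp; exact ⟨this.1, by omega⟩
      · intro p hp h1 h2
        by_cases hcase : N - k < p.1
        · exact ih3 p hp hcase h2
        · have hpr : p.1 = N - k := by omega
          by_cases hfree : ∀ q ∈ S, q.2 ≠ p.2
          · exfalso
            apply h
            refine ⟨p.2, ?_⟩
            simp only [Finset.mem_image, Finset.mem_filter]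
            exact ⟨p, ⟨hp, hpr, hfree⟩, rfl⟩
          · push_neg at hfree
            obtain ⟨q, hq, hq2⟩ := hfree
            refine ⟨q, hq, Or.inl ⟨hq2, ?_⟩⟩
            have := (ih1 q hq).2; omega

lemma dark_spec (γ : WeakComp) (h0 : γ 0 = 0) :
    (∀ p ∈ dark (keyDiagram γ), p ∈ keyDiagram γ) ∧
    (∀ p ∈ dark (keyDiagram γ), ∀ q ∈ dark (keyDiagram γ),
        p.2 = q.2 ∨ p.1 = q.1 → p = q) ∧
    (∀ p ∈ keyDiagram γ, ∃ q ∈ dark (keyDiagram γ),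
        (q.2 = p.2 ∧ p.1 < q.1) ∨ (q.1 = p.1 ∧ p.2 ≤ q.2)) := by
  have hD : ∀ p ∈ keyDiagram γ, 1 ≤ p.1 := fun p hp => keyDiagram_row_pos h0 hp
  obtain ⟨h1, h2, h3⟩ :=
    darkAux_spec (keyDiagram γ) hD (rowBound (keyDiagram γ)) (rowBound (keyDiagram γ))
  exact ⟨fun p hp => (h1 p hp).1, h2, fun p hp =>
    h3 p hp (by have := hD p hp; omega) (row_le_rowBound hp)⟩

lemma darkAux_snowy (α : WeakComp) (hs : Snowy α) (h0 : α 0 = 0) (N : ℕ)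
    (hN : ∀ r ∈ α.support, r ≤ N) :
    ∀ k, darkAux (keyDiagram α) N k =
      (α.support.filter fun r => N - k < r).image fun r => (r, α r) := by
  intro k
  induction k with
  | zero =>
    have h : (α.support.filter fun r => N - 0 < r) = ∅ := by
      rw [Finset.filter_eq_empty_iff]; intro r hr; have := hN r hr; omega
    rw [darkAux, h, Finset.image_empty]
  | succ k ih =>
    rw [darkAux, ih]
    set r0 := N - k with hr0
    set S := (α.support.filter fun r => r0 < r).image fun r => (r, α r) with hSdef
    have hmemS : ∀ q, q ∈ S ↔ ∃ r', α r' ≠ 0 ∧ r0 < r' ∧ q = (r', α r') := by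
      intro q
      rw [hSdef]
      simp only [Finset.mem_image, Finset.mem_filter, Finsupp.mem_support_iff]
      constructor
      · rintro ⟨r', ⟨h1, h2⟩, rfl⟩; exact ⟨r', h1, h2, rfl⟩
      · rintro ⟨r', h1, h2, rfl⟩; exact ⟨r', ⟨h1, h2⟩, rfl⟩
    unfold darkStep
    dsimp only
    split
    case isTrue h =>
      obtain ⟨c0, hc0⟩ := h
      have hα : α r0 ≠ 0 := by
        simp only [Finset.mem_image, Finset.mem_filter] at hc0
        obtain ⟨p, ⟨hp, hp1, -⟩, rfl⟩ := hc0
        obtain ⟨h1, h2⟩ := mem_keyDiagram.1 hp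
        rw [hp1] at h2; omega
      have hr0D : (r0, α r0) ∈ keyDiagram α :=
        mem_keyDiagram.2 ⟨Nat.one_le_iff_ne_zero.2 hα, le_refl _⟩
      have hfree : ∀ q ∈ S, q.2 ≠ α r0 := by
        intro q hq
        obtain ⟨r', h1, h2, rfl⟩ := (hmemS q).1 hq
        intro hcol
        have := hs r0 r' (Nat.pos_of_ne_zero hα) hcol.symm
        omega
      have hfilter : (α.support.filter fun r => N - (k + 1) < r)
          = insert r0 (α.support.filter fun r => r0 < r) := by
        ext r
        simp only [Finset.mem_insert, Finset.mem_filter, Finsupp.mem_support_iff]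
        constructor
        · rintro ⟨h1, h2⟩
          by_cases hrr : r = r0
          · exact Or.inl hrr
          · exact Or.inr ⟨h1, by omega⟩
        · rintro (rfl | ⟨h1, h2⟩)
          · have hr01 : 1 ≤ r0 := by
              rcases Nat.eq_zero_or_pos r0 with hz | hz
              · rw [hz] at hα; exact absurd h0 hα
              · exact hz
            exact ⟨hα, by omega⟩
          · exact ⟨h1, by omega⟩
      rw [hfilter, Finset.image_insert, ← hSdef]
      congr 2
      apply le_antisymm
      · apply Finset.max'_le
        intro y hy
        simp only [Finset.mem_image, Finset.mem_filter] at hy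
        obtain ⟨p, ⟨hp, hp1, -⟩, rfl⟩ := hy
        obtain ⟨h1, h2⟩ := mem_keyDiagram.1 hp
        rw [hp1] at h2; exact h2
      · apply Finset.le_max'
        simp only [Finset.mem_image, Finset.mem_filter]
        exact ⟨(r0, α r0), ⟨hr0D, rfl, hfree⟩, rfl⟩
    case isFalse h =>
      have hα : α r0 = 0 := by
        by_contra hα
        apply h
        have hr0D : (r0, α r0) ∈ keyDiagram α :=
          mem_keyDiagram.2 ⟨Nat.one_le_iff_ne_zero.2 hα, le_refl _⟩
        have hfree : ∀ q ∈ S, q.2 ≠ α r0 := by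
          intro q hq
          obtain ⟨r', h1, h2, rfl⟩ := (hmemS q).1 hq
          intro hcol
          have := hs r0 r' (Nat.pos_of_ne_zero hα) hcol.symm
          omega
        refine ⟨α r0, ?_⟩
        simp only [Finset.mem_image, Finset.mem_filter]
        exact ⟨(r0, α r0), ⟨hr0D, rfl, hfree⟩, rfl⟩
      have hfeq : (α.support.filter fun r => N - (k + 1) < r)
          = α.support.filter fun r => r0 < r := by
        ext r
        simp only [Finset.mem_filter, Finsupp.mem_support_iff]
        constructor
        · rintro ⟨h1, h2⟩
          have : r ≠ r0 := fun hrr => h1 (hrr ▸ hα)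
          exact ⟨h1, by omega⟩
        · rintro ⟨h1, h2⟩; exact ⟨h1, by omega⟩
      rw [hfeq, ← hSdef]

lemma dark_snowy (α : WeakComp) (hs : Snowy α) (h0 : α 0 = 0) :
    dark (keyDiagram α) = α.support.image fun r => (r, α r) := by
  have hN : ∀ r ∈ α.support, r ≤ rowBound (keyDiagram α) := by
    intro r hr
    have hr' : α r ≠ 0 := Finsupp.mem_support_iff.1 hr
    have : (r, 1) ∈ keyDiagram α :=
      mem_keyDiagram.2 ⟨le_refl _, Nat.one_le_iff_ne_zero.2 hr'⟩
    exact row_le_rowBound this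
  rw [dark, darkAux_snowy α hs h0 _ hN]
  congr 1
  rw [Nat.sub_self]
  apply Finset.filter_true_of_mem
  intro r hr
  have hr' : α r ≠ 0 := Finsupp.mem_support_iff.1 hr
  rcases Nat.eq_zero_or_pos r with h | h
  · rw [h] at hr'; exact absurd h0 hr'
  · exact h

lemma mem_snow {D : Finset (ℕ × ℕ)} {p : ℕ × ℕ} :
    p ∈ snow D ↔ p ∈ D ∨ ∃ q ∈ dark D, q.2 = p.2 ∧ 1 ≤ p.1 ∧ p.1 ≤ q.1 := by
  unfold snow
  simp only [Finset.mem_union, Finset.mem_biUnion, Finset.mem_image, Finset.mem_Icc]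
  constructor
  · rintro (h | ⟨q, hq, r, ⟨h1, h2⟩, rfl⟩)
    · exact Or.inl h
    · exact Or.inr ⟨q, hq, rfl, h1, h2⟩
  · rintro (h | ⟨q, hq, hcol, h1, h2⟩)
    · exact Or.inl h
    · exact Or.inr ⟨q, hq, p.1, ⟨h1, h2⟩, by rw [hcol, Prod.mk.eta]⟩

lemma rajcodeD_zero (γ : WeakComp) (h0 : γ 0 = 0) : rajcodeD (keyDiagram γ) 0 = 0 := by
  unfold rajcodeD
  rw [Finset.card_eq_zero, Finset.filter_eq_empty_iff]
  intro p hp hp0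
  rcases mem_snow.1 hp with hD | ⟨q, hq, _, h1, _⟩
  · have := keyDiagram_row_pos h0 hD; omega
  · omega

lemma rajcodeD_eq_card (γ : WeakComp) (h0 : γ 0 = 0) {r : ℕ} (hr : 1 ≤ r) :
    rajcodeD (keyDiagram γ) r =
      (Finset.Icc 1 (γ r) ∪
        ((dark (keyDiagram γ)).filter fun q => r ≤ q.1).image Prod.snd).card := by
  unfold rajcodeD
  rw [← Finset.card_image_of_injective _
    (show Function.Injective (fun c => ((r, c) : ℕ × ℕ)) from
      fun a b h => (Prod.ext_iff.1 h).2)]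
  congr 1
  ext p
  simp only [Finset.mem_filter, Finset.mem_image, Finset.mem_union, Finset.mem_Icc]
  constructor
  · rintro ⟨hp, hp1⟩
    rcases mem_snow.1 hp with hD | ⟨q, hq, hcol, h1, h2⟩
    · obtain ⟨h1, h2⟩ := mem_keyDiagram.1 hD
      exact ⟨p.2, Or.inl ⟨h1, by rw [← hp1]; exact h2⟩, by rw [← hp1, Prod.mk.eta]⟩
    · exact ⟨p.2, Or.inr ⟨q, ⟨hq, by omega⟩, hcol⟩, by rw [← hp1, Prod.mk.eta]⟩
  · rintro ⟨c, hc, rfl⟩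
    refine ⟨?_, rfl⟩
    rcases hc with ⟨h1, h2⟩ | ⟨q, ⟨hq, hq1⟩, rfl⟩
    · exact mem_snow.2 (Or.inl (mem_keyDiagram.2 ⟨h1, h2⟩))
    · exact mem_snow.2 (Or.inr ⟨q, hq, rfl, hr, hq1⟩)

lemma rajcode_snowy_card {α : WeakComp} (h0 : α 0 = 0) (hs : Snowy α) {r : ℕ}
    (hr : 1 ≤ r) :
    rajcode α r =
      (Finset.Icc 1 (α r) ∪ (α.support.filter fun r' => r < r').image α).card := by
  unfold rajcode
  rw [rajcodeD_eq_card α h0 hr, dark_snowy α hs h0]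
  congr 1
  ext c
  simp only [Finset.mem_union, Finset.mem_Icc, Finset.mem_image, Finset.mem_filter,
    Finsupp.mem_support_iff]
  constructor
  · rintro (h | ⟨q, ⟨⟨r', hr', rfl⟩, hq1⟩, rfl⟩)
    · exact Or.inl h
    · by_cases hrr : r' = r
      · subst hrr
        exact Or.inl ⟨Nat.one_le_iff_ne_zero.2 hr', le_refl _⟩
      · have : r < r' := by
          simp only at hq1
          omega
        exact Or.inr ⟨r', ⟨hr', this⟩, rfl⟩
  · rintro (h | ⟨r', ⟨hr', hlt⟩, rfl⟩)
    · exact Or.inl h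
    · exact Or.inr ⟨(r', α r'), ⟨⟨r', hr', rfl⟩, by simp only; omega⟩, rfl⟩

lemma card_union_lt {a b : ℕ} {A : Finset ℕ} (hab : a < b) (hb : 1 ≤ b)
    (hbA : b ∉ A) :
    (Finset.Icc 1 a ∪ A).card < (Finset.Icc 1 b ∪ A).card := by
  apply Finset.card_lt_card
  rw [Finset.ssubset_iff_of_subset
    (Finset.union_subset_union (Finset.Icc_subset_Icc_right (le_of_lt hab))
      (Finset.Subset.refl _))]
  refine ⟨b, Finset.mem_union_left _ (Finset.mem_Icc.2 ⟨hb, le_refl _⟩), ?_⟩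
  simp only [Finset.mem_union, Finset.mem_Icc]
  push_neg
  exact ⟨fun _ => by omega, hbA⟩

lemma snowy_rajcode_injective {α β : WeakComp} (hα0 : α 0 = 0) (hβ0 : β 0 = 0)
    (hαs : Snowy α) (hβs : Snowy β) (h : ∀ r, rajcode α r = rajcode β r) : α = β := by
  by_contra hne
  set T := (α.support ∪ β.support).filter fun r => α r ≠ β r with hT
  have hTne : T.Nonempty := by
    obtain ⟨r, hr⟩ : ∃ r, α r ≠ β r := by
      by_contra hc; push_neg at hc; exact hne (Finsupp.ext hc)
    refine ⟨r, Finset.mem_filter.2 ⟨Finset.mem_union.2 ?_, hr⟩⟩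
    by_cases h1 : α r = 0
    · exact Or.inr (Finsupp.mem_support_iff.2 (by rw [h1] at hr; exact fun h2 => hr h2.symm))
    · exact Or.inl (Finsupp.mem_support_iff.2 h1)
  set r := T.max' hTne with hrdef
  have hrT := T.max'_mem hTne
  have hrne : α r ≠ β r := (Finset.mem_filter.1 hrT).2
  have hr1 : 1 ≤ r := by
    rcases Nat.eq_zero_or_pos r with hz | hz
    · rw [hz, hα0, hβ0] at hrne; exact absurd rfl hrne
    · exact hz
  have hagree : ∀ j, r < j → α j = β j := by
    intro j hj
    by_contra hc
    have hjT : j ∈ T := by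
      refine Finset.mem_filter.2 ⟨Finset.mem_union.2 ?_, hc⟩
      by_cases h1 : α j = 0
      · exact Or.inr (Finsupp.mem_support_iff.2 (by rw [h1] at hc; exact fun h2 => hc h2.symm))
      · exact Or.inl (Finsupp.mem_support_iff.2 h1)
    have := T.le_max' j hjT
    omega
  have hsets : (α.support.filter fun r' => r < r').image α
      = (β.support.filter fun r' => r < r').image β := by
    ext c
    simp only [Finset.mem_image, Finset.mem_filter, Finsupp.mem_support_iff]
    constructor
    · rintro ⟨r', ⟨h1, h2⟩, rfl⟩
      exact ⟨r', ⟨by rw [← hagree r' h2]; exact h1, h2⟩, (hagree r' h2).symm⟩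
    · rintro ⟨r', ⟨h1, h2⟩, rfl⟩
      exact ⟨r', ⟨by rw [hagree r' h2]; exact h1, h2⟩, hagree r' h2⟩
  have hcard : (Finset.Icc 1 (α r) ∪ (α.support.filter fun r' => r < r').image α).card
      = (Finset.Icc 1 (β r) ∪ (α.support.filter fun r' => r < r').image α).card := by
    rw [← rajcode_snowy_card hα0 hαs hr1, h r, rajcode_snowy_card hβ0 hβs hr1, hsets]
  rcases Nat.lt_or_ge (α r) (β r) with hlt | hge
  · have hbA : β r ∉ (α.support.filter fun r' => r < r').image α := by
      rw [hsets]
      simp only [Finset.mem_image, Finset.mem_filter, Finsupp.mem_support_iff]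
      rintro ⟨r', ⟨h1, h2⟩, hval⟩
      have := hβs r r' (by omega) hval.symm
      omega
    have := card_union_lt hlt (by omega) hbA
    omega
  · have hlt : β r < α r := by omega
    have haA : α r ∉ (α.support.filter fun r' => r < r').image α := by
      simp only [Finset.mem_image, Finset.mem_filter, Finsupp.mem_support_iff]
      rintro ⟨r', ⟨h1, h2⟩, hval⟩
      have := hαs r r' (by omega) hval.symm
      omega
    have := card_union_lt hlt (by omega) haA
    omega


/-- each rajcode-equivalence class contains a unique snowy weak
composition, and it is the entry-wise minimum of the class. -/
theorem snowy_unique_min_in_rajcode_class (γ : WeakComp) (hγ : γ 0 = 0) :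
    (∃! α : WeakComp, α 0 = 0 ∧ Snowy α ∧ ∀ r, rajcode α r = rajcode γ r) ∧
    ∀ α : WeakComp, (α 0 = 0 ∧ Snowy α ∧ ∀ r, rajcode α r = rajcode γ r) →
      ∀ r, α r ≤ γ r := by
  obtain ⟨hMD, hMinj, hMcov⟩ := dark_spec γ hγ
  set M := dark (keyDiagram γ) with hM
  set β : WeakComp := ∑ p ∈ M, Finsupp.single p.1 p.2 with hβ
  have happly : ∀ r, β r = ∑ p ∈ M, if p.1 = r then p.2 else 0 := by
    intro r
    rw [hβ, Finsupp.finset_sum_apply]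
    exact Finset.sum_congr rfl fun p _ => Finsupp.single_apply
  have hrow : ∀ q ∈ M, β q.1 = q.2 := by
    intro q hq
    rw [happly, Finset.sum_eq_single q]
    · rw [if_pos rfl]
    · intro p hp hpq
      rw [if_neg]
      intro h1
      exact hpq (hMinj p hp q hq (Or.inr h1))
    · intro h1; exact absurd hq h1
  have hexists : ∀ r, β r ≠ 0 → (r, β r) ∈ M := by
    intro r h1
    by_cases h2 : ∃ q ∈ M, q.1 = r
    · obtain ⟨q, hq, hq1⟩ := h2
      have hb : β r = q.2 := by rw [← hq1]; exact hrow q hq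
      rw [hb, ← hq1, Prod.mk.eta]
      exact hq
    · exfalso
      apply h1
      rw [happly]
      apply Finset.sum_eq_zero
      intro p hp
      rw [if_neg]
      exact fun hc => h2 ⟨p, hp, hc⟩
  have hle : ∀ r, β r ≤ γ r := by
    intro r
    by_cases h1 : β r = 0
    · omega
    · exact (mem_keyDiagram.1 (hMD _ (hexists r h1))).2
  have hβ0 : β 0 = 0 := by
    by_contra h1
    have := keyDiagram_row_pos hγ (hMD _ (hexists 0 h1))
    simp at this
  have hsnowy : Snowy β := by
    intro r r' hpos heq
    have h1 : (r, β r) ∈ M := hexists r (by omega)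
    have h2 : (r', β r') ∈ M := hexists r' (by omega)
    have := hMinj _ h1 _ h2 (Or.inl (by simpa using heq))
    exact (Prod.ext_iff.1 this).1
  have hMeq : M = β.support.image fun r => (r, β r) := by
    ext q
    simp only [Finset.mem_image, Finsupp.mem_support_iff]
    constructor
    · intro hq
      have hq2 : 1 ≤ q.2 := (mem_keyDiagram.1 (hMD q hq)).1
      have hb := hrow q hq
      refine ⟨q.1, by omega, ?_⟩
      rw [hb, Prod.mk.eta]
    · rintro ⟨r, h1, rfl⟩
      exact hexists r h1
  have hdarkβ : dark (keyDiagram β) = M := by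
    rw [dark_snowy β hsnowy hβ0, ← hMeq]
  have hraj : ∀ r, rajcode β r = rajcode γ r := by
    intro r
    rcases Nat.eq_zero_or_pos r with rfl | hr
    · unfold rajcode
      rw [rajcodeD_zero β hβ0, rajcodeD_zero γ hγ]
    · unfold rajcode
      rw [rajcodeD_eq_card β hβ0 hr, rajcodeD_eq_card γ hγ hr, hdarkβ]
      congr 1
      apply Finset.Subset.antisymm
      · exact Finset.union_subset_union (Finset.Icc_subset_Icc_right (hle r))
          (Finset.Subset.refl _)
      · apply Finset.union_subset
        · intro c hc
          obtain ⟨hc1, hc2⟩ := Finset.mem_Icc.1 hc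
          have hcD : (r, c) ∈ keyDiagram γ := mem_keyDiagram.2 ⟨hc1, hc2⟩
          obtain ⟨q, hq, hcases⟩ := hMcov _ hcD
          rcases hcases with ⟨hcol, hrow'⟩ | ⟨hrow', hcol⟩
          · apply Finset.mem_union_right
            simp only [Finset.mem_image, Finset.mem_filter]
            refine ⟨q, ⟨hq, ?_⟩, hcol⟩
            simp only at hrow'
            omega
          · apply Finset.mem_union_left
            rw [Finset.mem_Icc]
            simp only at hrow' hcol
            have hb : β r = q.2 := by rw [← hrow']; exact hrow q hq
            exact ⟨hc1, by omega⟩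
        · exact Finset.subset_union_right
  refine ⟨⟨β, ⟨hβ0, hsnowy, hraj⟩, ?_⟩, ?_⟩
  · rintro α ⟨h1, h2, h3⟩
    exact snowy_rajcode_injective h1 hβ0 h2 hsnowy fun r => by rw [h3 r, hraj r]
  · rintro α ⟨h1, h2, h3⟩ r
    have hab : α = β :=
      snowy_rajcode_injective h1 hβ0 h2 hsnowy fun r => by rw [h3 r, hraj r]
    rw [hab]
    exact hle r

end
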